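/- Dual oscillation bound: let ν be a finite nonnegative Borel measure on R^d, Ω ⊂ B(z,ρ) with dist(Ω, supp(ν)) ≥ ερ, M ≥ 6, and let σ be a finite signed measure supported on Ω with σ(Ω) = 0. Then ∫_{R^d} |R(σ)| dν ≤ [ (2/(ερ)^s) ν(B(z, Mρ/3)) + (C/M) sup_{r>0} ν(B(z,r))/r^s ] · |σ|(Ω), where R(σ)(y) = ∫ (x−y)/|x−y|^{1+s} dσ(x) and C depends only on s and d. -/

import Mathlib

open MeasureTheory Metric Set
open scoped ENNReal

/-- The fractional Riesz kernel `K(w) = w / |w|^{1+s}`. -/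
noncomputable def rieszKernel (d : ℕ) (s : ℝ) (w : EuclideanSpace ℝ (Fin d)) :
    EuclideanSpace ℝ (Fin d) :=
  (‖w‖ ^ (1 + s))⁻¹ • w

/-- The support of a measure. -/
def measSupport (d : ℕ) (μ : Measure (EuclideanSpace ℝ (Fin d))) :
    Set (EuclideanSpace ℝ (Fin d)) :=
  {x | ∀ ε : ℝ, 0 < ε → 0 < μ (ball x ε)}

lemma ae_mem_measSupport (d : ℕ) (ν : Measure (EuclideanSpace ℝ (Fin d))) :
    ∀ᵐ y ∂ν, y ∈ measSupport d ν := by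
  rw [MeasureTheory.ae_iff]
  set T : Set (EuclideanSpace ℝ (Fin d)) := {y | ¬ y ∈ measSupport d ν} with hTdef
  have hT : ∀ y : T, ∃ r : ℝ, 0 < r ∧ ν (ball (y : EuclideanSpace ℝ (Fin d)) r) = 0 := by
    rintro ⟨y, hy⟩
    simp only [hTdef, measSupport, mem_setOf_eq, not_forall, not_lt, nonpos_iff_eq_zero] at hy
    obtain ⟨r, hr, h⟩ := hy
    exact ⟨r, hr, h⟩
  choose r hr hνr using hT
  obtain ⟨tc, htc, htU⟩ := TopologicalSpace.isOpen_iUnion_countable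
    (fun y : T => ball (y : EuclideanSpace ℝ (Fin d)) (r y)) (fun y => isOpen_ball)
  have hsub : T ⊆ ⋃ y ∈ tc, ball (y : EuclideanSpace ℝ (Fin d)) (r y) := by
    rw [htU]
    intro y hy
    exact mem_iUnion.2 ⟨⟨y, hy⟩, mem_ball_self (hr ⟨y, hy⟩)⟩
  exact measure_mono_null hsub ((measure_biUnion_null_iff htc).2 fun y _ => hνr y)

lemma rieszKernel_eq (d : ℕ) (s : ℝ) (w : EuclideanSpace ℝ (Fin d)) :
    rieszKernel d s w = (‖w‖ ^ (-(1 + s))) • w := by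
  rw [rieszKernel, Real.rpow_neg (norm_nonneg w)]

lemma norm_rieszKernel_le {d : ℕ} {s c : ℝ} (hs : 0 < s) {w : EuclideanSpace ℝ (Fin d)}
    (hc : 0 < c) (hw : c ≤ ‖w‖) : ‖rieszKernel d s w‖ ≤ c ^ (-s) := by
  have hw0 : (0:ℝ) < ‖w‖ := lt_of_lt_of_le hc hw
  have hnorm : ‖rieszKernel d s w‖ = ‖w‖ ^ (-s) := by
    rw [rieszKernel_eq, norm_smul, Real.norm_eq_abs,
      abs_of_nonneg (Real.rpow_nonneg (norm_nonneg w) _),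
      show -s = -(1 + s) + 1 by ring, Real.rpow_add hw0, Real.rpow_one]
  rw [hnorm]
  exact Real.rpow_le_rpow_of_nonpos hc hw (by linarith)

lemma abs_rpow_neg_sub_le {p m t u : ℝ} (hp : 0 < p) (hm : 0 < m) (ht : m ≤ t) (hu : m ≤ u) :
    |t ^ (-p) - u ^ (-p)| ≤ p * m ^ (-(p + 1)) * |t - u| := by
  have bound : ∀ x ∈ Ici m, ‖(-p) * x ^ (-p - 1)‖ ≤ p * m ^ (-(p + 1)) := by
    intro x hx
    rw [Real.norm_eq_abs, abs_mul, abs_neg, abs_of_pos hp,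
      abs_of_nonneg (Real.rpow_nonneg (le_trans hm.le hx) _)]
    have : x ^ (-p - 1) ≤ m ^ (-(p + 1)) := by
      rw [show -(p+1) = -p-1 by ring]
      exact Real.rpow_le_rpow_of_nonpos hm hx (by linarith)
    exact mul_le_mul_of_nonneg_left this hp.le
  have key := Convex.norm_image_sub_le_of_norm_hasDerivWithin_le
    (f := fun r : ℝ => r ^ (-p)) (f' := fun r : ℝ => (-p) * r ^ (-p - 1))
    (fun x hx => (Real.hasDerivAt_rpow_const
      (Or.inl (ne_of_gt (lt_of_lt_of_le hm hx)))).hasDerivWithinAt)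
    bound (convex_Ici m) hu ht
  simpa [Real.norm_eq_abs] using key

lemma norm_rieszKernel_sub_le {d : ℕ} {s : ℝ} (hs : 0 < s) {a b : EuclideanSpace ℝ (Fin d)}
    (hb : 0 < ‖b‖) (hab : ‖a - b‖ ≤ ‖b‖ / 2) :
    ‖rieszKernel d s a - rieszKernel d s b‖ ≤
      (2 ^ (1 + s) + (1 + s) * 2 ^ (2 + s)) * ‖b‖ ^ (-(1 + s)) * ‖a - b‖ := by
  set p : ℝ := 1 + s with hp
  have hp0 : 0 < p := by simp [hp]; linarith
  set m : ℝ := ‖b‖ / 2 with hm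
  have hm0 : 0 < m := by positivity
  have ha : m ≤ ‖a‖ := by
    have h1 : ‖b‖ - ‖a‖ ≤ ‖b - a‖ := norm_sub_norm_le b a
    rw [norm_sub_rev] at h1
    simp only [hm]; linarith
  have hbm : m ≤ ‖b‖ := by simp only [hm]; linarith
  have hdecomp : rieszKernel d s a - rieszKernel d s b
      = (‖a‖ ^ (-p)) • (a - b) + ((‖a‖ ^ (-p)) - (‖b‖ ^ (-p))) • b := by
    rw [rieszKernel_eq, rieszKernel_eq, ← hp, smul_sub, sub_smul]
    abel
  have hmp : m ^ (-p) = 2 ^ p * ‖b‖ ^ (-p) := by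
    rw [hm, Real.div_rpow (norm_nonneg b) (by norm_num), Real.rpow_neg (by norm_num : (0:ℝ) ≤ 2),
      div_inv_eq_mul, mul_comm]
  have hmp1 : m ^ (-(p+1)) * ‖b‖ = 2 ^ (p+1) * ‖b‖ ^ (-p) := by
    rw [hm, Real.div_rpow (norm_nonneg b) (by norm_num),
      Real.rpow_neg (by norm_num : (0:ℝ) ≤ 2), div_inv_eq_mul,
      show ‖b‖ ^ (-(p+1)) * 2 ^ (p+1) * ‖b‖ = 2 ^ (p+1) * (‖b‖ ^ (-(p+1)) * ‖b‖ ^ (1:ℝ)) by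
        rw [Real.rpow_one]; ring,
      ← Real.rpow_add hb, show -(p+1) + 1 = -p by ring]
  calc ‖rieszKernel d s a - rieszKernel d s b‖
      ≤ ‖(‖a‖ ^ (-p)) • (a - b)‖ + ‖((‖a‖ ^ (-p)) - (‖b‖ ^ (-p))) • b‖ := by
        rw [hdecomp]; exact norm_add_le _ _
    _ ≤ m ^ (-p) * ‖a - b‖ + (p * m ^ (-(p+1)) * ‖a - b‖) * ‖b‖ := by
        gcongr ?_ + ?_
        · rw [norm_smul, Real.norm_eq_abs, abs_of_nonneg (Real.rpow_nonneg (norm_nonneg a) _)]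
          exact mul_le_mul_of_nonneg_right
            (Real.rpow_le_rpow_of_nonpos hm0 ha (by linarith)) (norm_nonneg _)
        · rw [norm_smul, Real.norm_eq_abs]
          have h3 : |‖a‖ ^ (-p) - ‖b‖ ^ (-p)| ≤ p * m ^ (-(p+1)) * |‖a‖ - ‖b‖| :=
            abs_rpow_neg_sub_le hp0 hm0 ha hbm
          have h4 : |‖a‖ - ‖b‖| ≤ ‖a - b‖ := abs_norm_sub_norm_le a b
          have h5 : |‖a‖ ^ (-p) - ‖b‖ ^ (-p)| ≤ p * m ^ (-(p+1)) * ‖a - b‖ :=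
            h3.trans (mul_le_mul_of_nonneg_left h4 (by positivity))
          exact mul_le_mul_of_nonneg_right h5 (norm_nonneg _)
    _ = (2 ^ p + p * 2 ^ (p+1)) * ‖b‖ ^ (-p) * ‖a - b‖ := by
        rw [hmp, show (p * m ^ (-(p+1)) * ‖a - b‖) * ‖b‖
            = p * (m ^ (-(p+1)) * ‖b‖) * ‖a - b‖ by ring, hmp1]
        ring
    _ = (2 ^ (1 + s) + (1 + s) * 2 ^ (2 + s)) * ‖b‖ ^ (-(1 + s)) * ‖a - b‖ := by
        rw [hp, show (1:ℝ) + s + 1 = 2 + s by ring]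

lemma far_integral_bound {d : ℕ} (ν : Measure (EuclideanSpace ℝ (Fin d))) [IsFiniteMeasure ν]
    {s D R : ℝ} (z : EuclideanSpace ℝ (Fin d)) (hs : 0 < s) (hR : 0 < R) (hD : 0 ≤ D)
    (hgrowth : ∀ r : ℝ, 0 < r → (ν (ball z r)).toReal ≤ D * r ^ s) :
    ∫ y in (ball z R)ᶜ, (dist y z) ^ (-(1 + s)) ∂ν ≤ 2 ^ (s + 1) * D / R := by
  set ψ : EuclideanSpace ℝ (Fin d) → ℝ := fun y => (dist y z) ^ (-(1 + s)) with hψ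
  have hψmeas : Measurable ψ := (measurable_dist.comp
    (measurable_id.prodMk measurable_const)).pow measurable_const
  have hψnonneg : ∀ y, 0 ≤ ψ y := fun y => Real.rpow_nonneg dist_nonneg _
  set A : ℕ → Set (EuclideanSpace ℝ (Fin d)) :=
    fun k => ball z (2 ^ (k + 1) * R) \ ball z (2 ^ k * R) with hA
  have hAmem : ∀ k y, y ∈ A k ↔ dist y z < 2 ^ (k + 1) * R ∧ 2 ^ k * R ≤ dist y z := by
    intro k y
    simp [hA, mem_ball, not_lt]
  have hAmeas : ∀ k, MeasurableSet (A k) :=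
    fun k => measurableSet_ball.diff measurableSet_ball
  have hAd : Pairwise (Function.onFun Disjoint A) := by
    have key : ∀ k l : ℕ, k < l → Disjoint (A k) (A l) := by
      intro k l hkl
      rw [Set.disjoint_left]
      intro y hyk hyl
      have h1 := ((hAmem k y).1 hyk).1
      have h2 := ((hAmem l y).1 hyl).2
      have h3 : (2:ℝ) ^ (k+1) * R ≤ 2 ^ l * R := by
        have : (2:ℝ) ^ (k+1) ≤ 2 ^ l := pow_le_pow_right₀ (by norm_num) hkl
        exact mul_le_mul_of_nonneg_right this hR.le
      linarith
    intro k l hkl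
    rcases lt_or_gt_of_ne hkl with h | h
    · exact key k l h
    · exact (key l k h).symm
  have hAU : (⋃ k, A k) = (ball z R)ᶜ := by
    ext y
    simp only [mem_iUnion, mem_compl_iff, mem_ball, not_lt]
    constructor
    · rintro ⟨k, hk⟩
      have h2 := ((hAmem k y).1 hk).2
      have : R ≤ 2 ^ k * R := le_mul_of_one_le_left hR.le (one_le_pow₀ (by norm_num))
      linarith
    · intro hy
      have hex : ∃ n : ℕ, dist y z < 2 ^ n * R := by
        obtain ⟨n, hn⟩ := pow_unbounded_of_one_lt (dist y z / R) (by norm_num : (1:ℝ) < 2)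
        exact ⟨n, by rwa [div_lt_iff₀ hR] at hn⟩
      classical
      set n := Nat.find hex with hn
      have hn1 : dist y z < 2 ^ n * R := Nat.find_spec hex
      have hn0 : n ≠ 0 := by
        intro h0
        rw [h0] at hn1
        simp at hn1
        linarith
      refine ⟨n - 1, (hAmem _ y).2 ⟨?_, ?_⟩⟩
      · rwa [show n - 1 + 1 = n from Nat.succ_pred_eq_of_pos (Nat.pos_of_ne_zero hn0)]
      · have := Nat.find_min hex (m := n - 1) (by omega)
        linarith [not_lt.1 this]
  have hψint : IntegrableOn ψ ((ball z R)ᶜ) ν := by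
    refine Integrable.mono' (integrable_const (R ^ (-(1 + s))))
      hψmeas.aestronglyMeasurable.restrict ?_
    rw [ae_restrict_iff' measurableSet_ball.compl]
    refine ae_of_all _ fun y hy => ?_
    rw [Real.norm_eq_abs, abs_of_nonneg (hψnonneg y)]
    have hy' : R ≤ dist y z := by simpa [mem_ball, not_lt] using hy
    exact Real.rpow_le_rpow_of_nonpos hR hy' (by linarith)
  have hSum : HasSum (fun k => ∫ y in A k, ψ y ∂ν) (∫ y in (ball z R)ᶜ, ψ y ∂ν) := by
    rw [← hAU]
    exact hasSum_integral_iUnion hAmeas hAd (hAU ▸ hψint)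
  have hterm : ∀ k : ℕ, ∫ y in A k, ψ y ∂ν ≤ (2 ^ s * D / R) * (2⁻¹) ^ k := by
    intro k
    have h2k : (0:ℝ) < 2 ^ k := by positivity
    have hc : ∀ y ∈ A k, ψ y ≤ ((2:ℝ) ^ k * R) ^ (-(1 + s)) := by
      intro y hy
      exact Real.rpow_le_rpow_of_nonpos (by positivity) ((hAmem k y).1 hy).2 (by linarith)
    have step1 : ∫ y in A k, ψ y ∂ν ≤ ((2:ℝ) ^ k * R) ^ (-(1 + s)) * (ν (A k)).toReal := by
      calc ∫ y in A k, ψ y ∂ν ≤ ∫ _ in A k, ((2:ℝ) ^ k * R) ^ (-(1 + s)) ∂ν := by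
            refine setIntegral_mono_on (hψint.mono_set ?_) ((integrableOn_const_iff enorm_ne_top).2 ?_)
              (hAmeas k) hc
            · rw [← hAU]; exact subset_iUnion A k
            · exact Or.inr (measure_lt_top ν _)
        _ = ((2:ℝ) ^ k * R) ^ (-(1 + s)) * (ν (A k)).toReal := by
            rw [setIntegral_const, smul_eq_mul, mul_comm]; rfl
    have step2 : (ν (A k)).toReal ≤ D * ((2:ℝ) ^ (k + 1) * R) ^ s := by
      refine le_trans (ENNReal.toReal_mono (measure_ne_top ν _)
        (measure_mono diff_subset)) (hgrowth _ (by positivity))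
    have step3 : ((2:ℝ) ^ k * R) ^ (-(1 + s)) * (D * ((2:ℝ) ^ (k + 1) * R) ^ s)
        = (2 ^ s * D / R) * (2⁻¹) ^ k := by
      set x : ℝ := 2 ^ k with hx
      have hx0 : (0:ℝ) < x := h2k
      have e1 : ((2:ℝ) ^ (k + 1) * R) ^ s = 2 ^ s * x ^ s * R ^ s := by
        rw [pow_succ, show (2:ℝ) ^ k * 2 * R = 2 * (x * R) by rw [hx]; ring,
          Real.mul_rpow (by norm_num) (by positivity), Real.mul_rpow hx0.le hR.le]
        ring
      have e2 : (x * R) ^ (-(1 + s)) = ((x * R) * (x ^ s * R ^ s))⁻¹ := by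
        rw [Real.rpow_neg (by positivity), show (1:ℝ) + s = 1 + s from rfl,
          Real.rpow_add (by positivity), Real.rpow_one,
          Real.mul_rpow hx0.le hR.le]
      rw [e1, e2, inv_pow, hx]
      field_simp
    calc ∫ y in A k, ψ y ∂ν ≤ ((2:ℝ) ^ k * R) ^ (-(1 + s)) * (ν (A k)).toReal := step1
      _ ≤ ((2:ℝ) ^ k * R) ^ (-(1 + s)) * (D * ((2:ℝ) ^ (k + 1) * R) ^ s) := by
          exact mul_le_mul_of_nonneg_left step2 (Real.rpow_nonneg (by positivity) _)
      _ = (2 ^ s * D / R) * (2⁻¹) ^ k := step3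
  have hgeom : HasSum (fun k : ℕ => (2 ^ s * D / R) * (2⁻¹) ^ k) ((2 ^ s * D / R) * 2) := by
    have h := hasSum_geometric_of_lt_one (r := (2:ℝ)⁻¹) (by norm_num) (by norm_num)
    have h2 : ((1:ℝ) - 2⁻¹)⁻¹ = 2 := by norm_num
    rw [h2] at h
    exact h.mul_left _
  have := hasSum_le hterm hSum hgeom
  calc ∫ y in (ball z R)ᶜ, ψ y ∂ν ≤ (2 ^ s * D / R) * 2 := this
    _ = 2 ^ (s + 1) * D / R := by
        rw [Real.rpow_add (by norm_num : (0:ℝ) < 2), Real.rpow_one]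
        ring

set_option maxHeartbeats 1000000

/-- Dual oscillation bound: if `σ = f dτ` is a signed measure supported on
`Ω ⊆ B(z,ρ)` with total mass zero, and `ν` is a nonnegative measure at distance
at least `ερ` from `Ω`, then
`∫ |R(σ)| dν ≤ [(2/(ερ)^s) ν(B(z,Mρ/3)) + (C/M) sup_{r>0} ν(B(z,r))/r^s] |σ|(Ω)`. -/
theorem riesz_dual_oscillation_lemma
    (d : ℕ) (hd : 2 ≤ d) (s : ℝ) (hs : s ∈ Set.Ioo ((d : ℝ) - 1) d) :
    ∃ C : ℝ, 0 < C ∧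
      ∀ (ν τ : Measure (EuclideanSpace ℝ (Fin d))),
        IsFiniteMeasure ν → IsFiniteMeasure τ →
      ∀ (f : EuclideanSpace ℝ (Fin d) → ℝ), Integrable f τ →
      ∀ (z : EuclideanSpace ℝ (Fin d)) (ρ ε M : ℝ)
        (Ω : Set (EuclideanSpace ℝ (Fin d))),
        0 < ρ → ε ∈ Set.Ioo (0 : ℝ) 1 → 6 ≤ M → Ω ⊆ ball z ρ →
        τ Ωᶜ = 0 → (∫ x, f x ∂τ) = 0 →
        (∀ w ∈ Ω, ∀ y ∈ measSupport d ν, ε * ρ ≤ dist w y) →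
        ∀ D : ℝ, 0 ≤ D → (∀ r : ℝ, 0 < r → (ν (ball z r)).toReal ≤ D * r ^ s) →
        (∫ y, ‖∫ x, f x • rieszKernel d s (x - y) ∂τ‖ ∂ν) ≤
          (2 / (ε * ρ) ^ s * (ν (ball z (M * ρ / 3))).toReal + C / M * D) *
            ∫ x, |f x| ∂τ := by
  obtain ⟨hs1, hs2⟩ := hs
  have hd2 : (2:ℝ) ≤ (d:ℝ) := by exact_mod_cast hd
  have hs0 : 0 < s := by linarith
  refine ⟨3 * 2 ^ (s + 1) * (2 ^ (1 + s) + (1 + s) * 2 ^ (2 + s)), by positivity, ?_⟩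
  intro ν τ hν hτ f hf z ρ ε M Ω hρ hε hM hΩ hτΩ hzero hsep D hD hgrowth
  haveI := hν; haveI := hτ
  obtain ⟨hε0, hε1⟩ := hε
  set C₀ : ℝ := 2 ^ (1 + s) + (1 + s) * 2 ^ (2 + s) with hC₀def
  have hC₀ : 0 < C₀ := by positivity
  have hM0 : (0:ℝ) < M := by linarith
  set R : ℝ := M * ρ / 3 with hRdef
  have hR : 0 < R := by positivity
  have hR2 : 2 * ρ ≤ R := by
    have h6 : 6 * ρ ≤ M * ρ := mul_le_mul_of_nonneg_right hM hρ.le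
    rw [hRdef]; linarith
  set F : ℝ := ∫ x, |f x| ∂τ with hFdef
  have hF0 : 0 ≤ F := integral_nonneg fun x => abs_nonneg _
  have hfa : ∀ᵐ x ∂τ, x ∈ Ω := MeasureTheory.ae_iff.2 hτΩ
  have hKmeas : Measurable (rieszKernel d s) :=
    ((measurable_norm.pow measurable_const).inv).smul measurable_id
  have hsm : ∀ y : EuclideanSpace ℝ (Fin d),
      AEStronglyMeasurable (fun x => f x • rieszKernel d s (x - y)) τ := fun y =>
    hf.aestronglyMeasurable.smul
      ((hKmeas.comp (measurable_id.sub measurable_const)).aestronglyMeasurable)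
  -- the near bound
  have hnear : ∀ y ∈ measSupport d ν,
      ‖∫ x, f x • rieszKernel d s (x - y) ∂τ‖ ≤ (ε * ρ) ^ (-s) * F := by
    intro y hy
    refine (norm_integral_le_integral_norm _).trans ?_
    have hb : ∀ᵐ x ∂τ, ‖f x • rieszKernel d s (x - y)‖ ≤ (ε * ρ) ^ (-s) * |f x| := by
      filter_upwards [hfa] with x hx
      rw [norm_smul, Real.norm_eq_abs, mul_comm (|f x|)]
      refine mul_le_mul_of_nonneg_right
        (norm_rieszKernel_le hs0 (by positivity) ?_) (abs_nonneg _)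
      rw [← dist_eq_norm]
      exact hsep x hx y hy
    refine le_trans (integral_mono_of_nonneg (ae_of_all _ fun x => norm_nonneg _)
      ((hf.abs).const_mul _) hb) ?_
    rw [integral_const_mul]
  -- the far bound
  have hfar : ∀ y : EuclideanSpace ℝ (Fin d), R ≤ dist y z →
      ‖∫ x, f x • rieszKernel d s (x - y) ∂τ‖
        ≤ (C₀ * ρ * (dist y z) ^ (-(1 + s))) * F := by
    intro y hy
    have hdyz : 0 < dist y z := lt_of_lt_of_le hR hy
    have hbz : ‖z - y‖ = dist y z := by rw [← dist_eq_norm, dist_comm]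
    have hxy : ∀ x ∈ Ω, ρ ≤ ‖x - y‖ := by
      intro x hx
      have h1 : dist x z < ρ := mem_ball.1 (hΩ hx)
      have h2 : dist y z ≤ dist y x + dist x z := dist_triangle y x z
      have h3 : dist y x = dist x y := dist_comm y x
      rw [← dist_eq_norm]
      linarith
    have hint1 : Integrable (fun x => f x • rieszKernel d s (x - y)) τ := by
      refine Integrable.mono' ((hf.abs).const_mul (ρ ^ (-s))) (hsm y) ?_
      filter_upwards [hfa] with x hx
      rw [norm_smul, Real.norm_eq_abs, mul_comm (|f x|)]
      exact mul_le_mul_of_nonneg_right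
        (norm_rieszKernel_le hs0 hρ (hxy x hx)) (abs_nonneg _)
    have hzero' : ∫ x, f x • rieszKernel d s (z - y) ∂τ = 0 := by
      rw [integral_smul_const, hzero, zero_smul]
    have heq : ∫ x, f x • rieszKernel d s (x - y) ∂τ
        = ∫ x, (f x • rieszKernel d s (x - y) - f x • rieszKernel d s (z - y)) ∂τ := by
      rw [integral_sub hint1 (hf.smul_const _), hzero', sub_zero]
    rw [heq]
    refine (norm_integral_le_integral_norm _).trans ?_
    have hb : ∀ᵐ x ∂τ, ‖f x • rieszKernel d s (x - y) - f x • rieszKernel d s (z - y)‖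
        ≤ (C₀ * ρ * (dist y z) ^ (-(1 + s))) * |f x| := by
      filter_upwards [hfa] with x hx
      rw [← smul_sub, norm_smul, Real.norm_eq_abs, mul_comm (|f x|)]
      refine mul_le_mul_of_nonneg_right ?_ (abs_nonneg _)
      have hsub : (x - y) - (z - y) = x - z := by abel
      have hzb : 0 < ‖z - y‖ := by rw [hbz]; exact hdyz
      have hxz : ‖x - z‖ ≤ ρ := by
        rw [← dist_eq_norm]; exact (mem_ball.1 (hΩ hx)).le
      have hab : ‖(x - y) - (z - y)‖ ≤ ‖z - y‖ / 2 := by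
        rw [hsub, hbz]; linarith
      have key := norm_rieszKernel_sub_le hs0 hzb hab
      calc ‖rieszKernel d s (x - y) - rieszKernel d s (z - y)‖
          ≤ C₀ * ‖z - y‖ ^ (-(1 + s)) * ‖(x - y) - (z - y)‖ := key
        _ ≤ C₀ * ρ * dist y z ^ (-(1 + s)) := by
            rw [hbz, hsub]
            refine le_trans (mul_le_mul_of_nonneg_left hxz
              (by positivity : (0:ℝ) ≤ C₀ * dist y z ^ (-(1 + s)))) (le_of_eq (by ring))
    refine le_trans (integral_mono_of_nonneg (ae_of_all _ fun x => norm_nonneg _)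
      ((hf.abs).const_mul _) hb) ?_
    rw [integral_const_mul]
  -- the dominating function on the ν side
  set B : Set (EuclideanSpace ℝ (Fin d)) := ball z R with hBdef
  classical
  set g : EuclideanSpace ℝ (Fin d) → ℝ :=
    B.piecewise (fun _ => (ε * ρ) ^ (-s) * F)
      (fun y => (C₀ * ρ * F) * (dist y z) ^ (-(1 + s))) with hgdef
  have hψmeas : Measurable fun y : EuclideanSpace ℝ (Fin d) => (dist y z) ^ (-(1 + s)) :=
    (measurable_dist.comp (measurable_id.prodMk measurable_const)).pow measurable_const
  have hgmeas : Measurable g :=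
    Measurable.piecewise measurableSet_ball measurable_const (hψmeas.const_mul _)
  have hgbound : ∀ y, ‖g y‖ ≤ (ε * ρ) ^ (-s) * F + (C₀ * ρ * F) * R ^ (-(1 + s)) := by
    intro y
    by_cases hyB : y ∈ B
    · rw [hgdef, Set.piecewise_eq_of_mem _ _ _ hyB, Real.norm_eq_abs,
        abs_of_nonneg (by positivity)]
      have : (0:ℝ) ≤ (C₀ * ρ * F) * R ^ (-(1 + s)) := by positivity
      linarith
    · rw [hgdef, Set.piecewise_eq_of_notMem _ _ _ hyB, Real.norm_eq_abs,
        abs_of_nonneg (by positivity)]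
      have hyR : R ≤ dist y z := by simpa [hBdef, mem_ball, not_lt] using hyB
      have h1 : (dist y z) ^ (-(1 + s)) ≤ R ^ (-(1 + s)) :=
        Real.rpow_le_rpow_of_nonpos hR hyR (by linarith)
      have h2 : (0:ℝ) ≤ (ε * ρ) ^ (-s) * F := by positivity
      nlinarith [mul_le_mul_of_nonneg_left h1 (by positivity : (0:ℝ) ≤ C₀ * ρ * F)]
  have hgint : Integrable g ν :=
    Integrable.mono' (integrable_const _) hgmeas.aestronglyMeasurable (ae_of_all _ hgbound)
  have hmain : (∫ y, ‖∫ x, f x • rieszKernel d s (x - y) ∂τ‖ ∂ν) ≤ ∫ y, g y ∂ν := by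
    refine integral_mono_of_nonneg (ae_of_all _ fun y => norm_nonneg _) hgint ?_
    filter_upwards [ae_mem_measSupport d ν] with y hy
    by_cases hyB : y ∈ B
    · rw [hgdef, Set.piecewise_eq_of_mem _ _ _ hyB]
      exact hnear y hy
    · rw [hgdef, Set.piecewise_eq_of_notMem _ _ _ hyB]
      refine le_trans (hfar y ?_) (le_of_eq (by ring))
      simpa [hBdef, mem_ball, not_lt] using hyB
  have hsplit : ∫ y, g y ∂ν = (ε * ρ) ^ (-s) * F * (ν B).toReal
      + (C₀ * ρ * F) * ∫ y in Bᶜ, (dist y z) ^ (-(1 + s)) ∂ν := by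
    rw [← integral_add_compl measurableSet_ball hgint]
    congr 1
    · have e : ∫ y in B, g y ∂ν = ∫ _ in B, ((ε * ρ) ^ (-s) * F) ∂ν :=
        setIntegral_congr_fun measurableSet_ball
          (fun y hy => Set.piecewise_eq_of_mem _ _ _ hy)
      rw [e, setIntegral_const, smul_eq_mul, mul_comm]; rfl
    · have e : ∫ y in Bᶜ, g y ∂ν
          = ∫ y in Bᶜ, (C₀ * ρ * F) * (dist y z) ^ (-(1 + s)) ∂ν :=
        setIntegral_congr_fun measurableSet_ball.compl
          (fun y hy => Set.piecewise_eq_of_notMem _ _ _ hy)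
      rw [e, integral_const_mul]
  have hfarint := far_integral_bound ν z hs0 hR hD hgrowth
  have hA2 : (C₀ * ρ * F) * (2 ^ (s + 1) * D / R)
      = (3 * 2 ^ (s + 1) * C₀ / M * D) * F := by
    rw [hRdef]
    field_simp
  have hA1 : (ε * ρ) ^ (-s) * F * (ν B).toReal
      ≤ 2 / (ε * ρ) ^ s * (ν B).toReal * F := by
    have hX : (0:ℝ) < (ε * ρ) ^ s := by positivity
    have h1 : (ε * ρ) ^ (-s) ≤ 2 / (ε * ρ) ^ s := by
      rw [Real.rpow_neg (by positivity), inv_eq_one_div,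
        show (2:ℝ) / (ε * ρ) ^ s = 2 * (1 / (ε * ρ) ^ s) by ring]
      have := one_div_pos.2 hX
      linarith
    calc (ε * ρ) ^ (-s) * F * (ν B).toReal
        ≤ (2 / (ε * ρ) ^ s) * F * (ν B).toReal := by
          exact mul_le_mul_of_nonneg_right (mul_le_mul_of_nonneg_right h1 hF0)
            ENNReal.toReal_nonneg
      _ = 2 / (ε * ρ) ^ s * (ν B).toReal * F := by ring
  calc (∫ y, ‖∫ x, f x • rieszKernel d s (x - y) ∂τ‖ ∂ν)
      ≤ ∫ y, g y ∂ν := hmain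
    _ = (ε * ρ) ^ (-s) * F * (ν B).toReal
        + (C₀ * ρ * F) * ∫ y in Bᶜ, (dist y z) ^ (-(1 + s)) ∂ν := hsplit
    _ ≤ (ε * ρ) ^ (-s) * F * (ν B).toReal + (C₀ * ρ * F) * (2 ^ (s + 1) * D / R) := by
        have : (0:ℝ) ≤ C₀ * ρ * F := by positivity
        nlinarith [mul_le_mul_of_nonneg_left hfarint this]
    _ ≤ 2 / (ε * ρ) ^ s * (ν B).toReal * F + (3 * 2 ^ (s + 1) * C₀ / M * D) * F := by
        rw [hA2]
        linarith [hA1]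
    _ = (2 / (ε * ρ) ^ s * (ν B).toReal + 3 * 2 ^ (s + 1) * C₀ / M * D) * F := by ring
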